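/- Let A be a topological commutative ring, α : A → A a continuous ring homomorphism, and M a finitely generated A-module equipped with its module (quotient) topology, i.e. the quotient topology under any A-linear surjection A^d ↠ M. Then every additive map β : M → M which is α-semilinear, meaning β(f·m) = α(f)·β(m) for all f ∈ A and m ∈ M, is continuous. -/

import Mathlib

/-- Let `A` be a topological commutative ring, `α : A → A` a continuous ring homomorphism, and
`M` a finitely generated `A`-module equipped with its module (quotient) topology, i.e. the
quotient topology under an `A`-linear surjection `pr : A^d ↠ M` (this topology is independent
of the chosen surjection).  Then every additive map `β : M → M` which is `α`-semilinear,
meaning `β (f • m) = α f • β m` for all `f ∈ A`, `m ∈ M`, is continuous. -/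
theorem statement9_semilinear_continuous
    (A : Type*) [CommRing A] [TopologicalSpace A] [IsTopologicalRing A]
    (α : A →+* A) (hα : Continuous α)
    (M : Type*) [AddCommGroup M] [Module A M] [TopologicalSpace M]
    [Module.Finite A M]
    (d : ℕ) (pr : (Fin d → A) →ₗ[A] M) (hpr : Function.Surjective pr)
    (htop : (inferInstance : TopologicalSpace M) =
      TopologicalSpace.coinduced pr (inferInstance : TopologicalSpace (Fin d → A)))
    (β : M →+ M) (hβ : ∀ (f : A) (m : M), β (f • m) = α f • β m) :
    Continuous β := by
  -- choose lifts of β (pr (eᵢ))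
  choose y hy using fun i : Fin d => hpr (β (pr (Pi.single i 1)))
  set g : (Fin d → A) → (Fin d → A) := fun x => ∑ i, α (x i) • y i with hg_def
  have hg : Continuous g := by
    apply continuous_finset_sum
    intro i _
    exact ((hα.comp (continuous_apply i)).smul continuous_const)
  have hprc : Continuous pr := continuous_iff_coinduced_le.mpr htop.ge
  have key : (β : M → M) ∘ pr = pr ∘ g := by
    funext x
    have hx : (x : Fin d → A) = ∑ i, x i • (Pi.single i 1 : Fin d → A) := by
      funext j
      simp [Finset.sum_apply, Pi.single_apply, mul_comm]
    simp only [Function.comp_apply, hg_def]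
    conv_lhs => rw [hx]
    rw [map_sum, map_sum, map_sum]
    refine Finset.sum_congr rfl fun i _ => ?_
    rw [map_smul, hβ, map_smul, hy]
  have hcomp : Continuous ((β : M → M) ∘ pr) := key ▸ hprc.comp hg
  have htop2 : ‹TopologicalSpace M› = TopologicalSpace.coinduced pr inferInstance := htop
  rw [htop2] at hcomp ⊢
  exact continuous_coinduced_dom.mpr hcomp
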